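/- The map f_σ is continuous at every point of C^σ = [0,1] \ (Q₂⁰ ∪ E^σ), where Q₂⁰ is the set of dyadic rationals in [0,1) together with 0 and 1, and E^σ is the set of points whose canonical expansion ends in w_ε^∞ after a prefix of length a multiple of k. Moreover f_σ is left-continuous at every nonzero dyadic rational. -/

import Mathlib

/-- Apply a `k`-block substitution blockwise to a finite word, dropping the
trailing partial block (the paper's truncation convention). -/
def blockApply (k : Nat) (sigma : List Bool -> List Bool) (w : List Bool) : List Bool :=
  if h : 0 < k && k <= w.length then
    sigma (w.take k) ++ blockApply k sigma (w.drop k)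
  else []
termination_by w.length
decreasing_by
  simp only [Bool.and_eq_true, decide_eq_true_eq] at h
  simp [List.length_drop]
  omega

/-- The length-`m` prefix of an infinite binary word. -/
def prefixOf (u : Nat -> Bool) (m : Nat) : List Bool := List.ofFn fun i : Fin m => u i

/-- Value of a finite binary word read as binary digits after the point. -/
noncomputable def valFin (w : List Bool) : ℝ :=
  (w.zipIdx.map fun p => if p.1 then ((2:ℝ))⁻¹ ^ (p.2 + 1) else 0).sum

/-- Value of an infinite binary word read as binary digits after the point. -/
noncomputable def valInf (u : Nat -> Bool) : ℝ :=
  ∑' i : Nat, if u i then ((2:ℝ))⁻¹ ^ (i + 1) else 0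

/-- A word is not eventually zero (it has infinitely many ones). -/
def NEZ (u : Nat -> Bool) : Prop := ∀ n, ∃ m, n ≤ m ∧ u m = true

open Classical in
/-- The unique binary expansion of `x ∈ (0,1]` not ending in `0^∞`
(junk value, the zero word, if no such expansion exists). -/
noncomputable def tilde (x : ℝ) : Nat -> Bool :=
  if h : ∃ u : Nat -> Bool, NEZ u ∧ valInf u = x then h.choose else fun _ => false

open Classical in
/-- The interval map induced by the erasing `k`-block substitution `sigma`
(with erased block `weps`) acting on binary expansions: `f x = 0.sigma(x̃)`,
with value `0` at `x = 0` (no expansion not ending in `0^∞`) and when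
`x̃ = weps^∞`. -/
noncomputable def fSigma (k : Nat) (sigma : List Bool -> List Bool) (weps : List Bool)
    (x : ℝ) : ℝ :=
  if (¬ ∃ u : Nat -> Bool, NEZ u ∧ valInf u = x) ∨
     (∀ i : Nat, tilde x i = weps.getD (i % k) false) then 0
  else ⨆ n : Nat, valFin (blockApply k sigma (prefixOf (tilde x) (n * k)))

/-- Dyadic rationals (in particular all of `Q₂⁰` within `[0,1]`). -/
def Dyadic01 : Set ℝ := {x | ∃ a b : Nat, x = (a : ℝ) / 2 ^ b}

/-- The set `E^σ` of points whose canonical expansion ends in `weps^∞` after a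
prefix of length a multiple of `k`. -/
def Esigma (k : Nat) (weps : List Bool) : Set ℝ :=
  {x | ∃ m : Nat, ∀ j : Nat, tilde x (m * k + j) = weps.getD (j % k) false}

private theorem enum_aux (w : List Bool) : ∀ n : ℕ,
    ((List.zipIdx w (n+1)).map fun p => if p.1 then ((2:ℝ))⁻¹ ^ (p.2 + 1) else 0).sum
    = 2⁻¹ * ((List.zipIdx w n).map fun p => if p.1 then ((2:ℝ))⁻¹ ^ (p.2 + 1) else 0).sum := by
  induction w with
  | nil => simp
  | cons b t ih =>
    intro n
    simp only [List.zipIdx_cons, List.map_cons, List.sum_cons, ih (n+1), mul_add]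
    congr 1
    by_cases h : b <;> simp [h, pow_succ] <;> ring

theorem valFin_nil : valFin [] = 0 := by simp [valFin]

theorem valFin_cons (b : Bool) (w : List Bool) :
    valFin (b :: w) = (if b then (2:ℝ)⁻¹ else 0) + 2⁻¹ * valFin w := by
  simp only [valFin, List.zipIdx_cons, List.map_cons, List.sum_cons]
  rw [show w.zipIdx 1 = w.zipIdx (0+1) from rfl, enum_aux]
  congr 1
  simp

theorem valFin_nonneg (w : List Bool) : 0 ≤ valFin w := by
  induction w with
  | nil => simp [valFin_nil]
  | cons b t ih =>
    rw [valFin_cons]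
    have : (0:ℝ) ≤ if b then (2:ℝ)⁻¹ else 0 := by positivity
    nlinarith

theorem valFin_le (w : List Bool) : valFin w ≤ 1 - (2:ℝ)⁻¹ ^ w.length := by
  induction w with
  | nil => simp [valFin_nil]
  | cons b t ih =>
    rw [valFin_cons, List.length_cons, pow_succ]
    have : (if b then (2:ℝ)⁻¹ else 0) ≤ 2⁻¹ := by split <;> norm_num
    nlinarith

theorem valFin_le_one (w : List Bool) : valFin w ≤ 1 := by
  have := valFin_le w; have : (0:ℝ) < 2⁻¹ ^ w.length := by positivity
  linarith [valFin_le w]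

theorem valFin_append (a b : List Bool) :
    valFin (a ++ b) = valFin a + (2:ℝ)⁻¹ ^ a.length * valFin b := by
  induction a with
  | nil => simp [valFin_nil]
  | cons x t ih => simp only [List.cons_append, valFin_cons, ih, List.length_cons, pow_succ]; ring

theorem valFin_dyadic (w : List Bool) : ∃ a : ℕ, valFin w = (a:ℝ) / 2 ^ w.length := by
  induction w with
  | nil => exact ⟨0, by simp [valFin_nil]⟩
  | cons b t ih =>
    obtain ⟨a, ha⟩ := ih
    refine ⟨(if b then 2^t.length else 0) + a, ?_⟩
    rw [valFin_cons, ha, List.length_cons]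
    have h2 : ((2:ℝ) ^ t.length) ≠ 0 := by positivity
    have h3 : ((2:ℝ) ^ (t.length + 1)) ≠ 0 := by positivity
    rw [eq_div_iff h3]
    cases b
    all_goals push_cast
    all_goals field_simp
    all_goals norm_num
    all_goals ring

theorem valFin_sep : ∀ (w1 w2 : List Bool), w1.length = w2.length → w1 ≠ w2 →
    valFin w1 + (2:ℝ)⁻¹ ^ w1.length ≤ valFin w2 ∨ valFin w2 + (2:ℝ)⁻¹ ^ w1.length ≤ valFin w1 := by
  intro w1
  induction w1 with
  | nil => intro w2 h hne; exact absurd (List.length_eq_zero_iff.mp h.symm).symm hne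
  | cons b t ih =>
    intro w2 h hne
    cases w2 with
    | nil => simp at h
    | cons c s =>
      simp only [List.length_cons, Nat.add_right_cancel_iff] at h
      by_cases hbc : b = c
      · subst hbc
        have hts : t ≠ s := fun he => hne (by rw [he])
        rcases ih s h hts with h1 | h1
        · left; rw [valFin_cons, valFin_cons, List.length_cons, pow_succ']; nlinarith
        · right; rw [valFin_cons, valFin_cons, List.length_cons, pow_succ']; nlinarith
      · have hlt : ∀ (x y : List Bool), x.length = y.length →
            valFin (false :: x) + (2:ℝ)⁻¹ ^ (x.length + 1) ≤ valFin (true :: y) := by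
          intro x y hxy
          have h1 := valFin_le x
          have h2 := valFin_nonneg y
          have hp : (0:ℝ) < 2⁻¹ ^ x.length := by positivity
          simp only [valFin_cons, pow_succ]
          norm_num
          nlinarith
        cases b
        · cases c
          · simp at hbc
          · left; simpa using hlt t s h
        · cases c
          · right; simpa [h] using hlt s t h.symm
          · simp at hbc

theorem geom_summable : Summable (fun i : ℕ => ((2:ℝ))⁻¹ ^ (i + 1)) := by
  have := (summable_geometric_of_lt_one (by norm_num) (by norm_num : (2:ℝ)⁻¹ < 1))
  exact this.comp_injective (add_left_injective 1)

theorem valInf_summable (u : ℕ → Bool) :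
    Summable (fun i : ℕ => if u i then ((2:ℝ))⁻¹ ^ (i + 1) else 0) := by
  apply Summable.of_nonneg_of_le (fun i => by positivity) (fun i => ?_) geom_summable
  split
  · exact le_refl _
  · positivity

theorem valInf_nonneg (u : ℕ → Bool) : 0 ≤ valInf u :=
  tsum_nonneg fun i => by positivity

theorem mygeom_sum_one : ∑' i : ℕ, ((2:ℝ))⁻¹ ^ (i + 1) = 1 := by
  have h : ∀ i : ℕ, ((2:ℝ))⁻¹ ^ (i + 1) = 2⁻¹ * 2⁻¹ ^ i := fun i => by rw [pow_succ]; ring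
  simp_rw [h]
  rw [tsum_mul_left, tsum_geometric_of_lt_one (by norm_num) (by norm_num)]
  norm_num

theorem valInf_le_one (u : ℕ → Bool) : valInf u ≤ 1 := by
  rw [← mygeom_sum_one]
  refine Summable.tsum_le_tsum (fun i => ?_) (valInf_summable u) geom_summable
  split
  · exact le_refl _
  · positivity

theorem valInf_pos {u : ℕ → Bool} (h : NEZ u) : 0 < valInf u := by
  obtain ⟨m, -, hm⟩ := h 0
  have := Summable.le_tsum (valInf_summable u) m (fun j _ => by split <;> positivity)
  rw [hm] at this
  simp only [if_true] at this
  calc (0:ℝ) < 2⁻¹ ^ (m+1) := by positivity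
    _ ≤ _ := this

theorem valInf_shift (u : ℕ → Bool) :
    valInf u = (if u 0 then (2:ℝ)⁻¹ else 0) + 2⁻¹ * valInf (fun i => u (i + 1)) := by
  rw [valInf, Summable.tsum_eq_zero_add (valInf_summable u)]
  congr 1
  · simp
  · simp only [valInf, ← tsum_mul_left]
    congr 1 with i
    split <;> simp <;> ring

theorem prefixOf_zero (u : ℕ → Bool) : prefixOf u 0 = [] := rfl

theorem prefixOf_succ (u : ℕ → Bool) (n : ℕ) :
    prefixOf u (n + 1) = u 0 :: prefixOf (fun i => u (i + 1)) n := by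
  simp [prefixOf, List.ofFn_succ]

theorem valInf_split (u : ℕ → Bool) (N : ℕ) :
    valInf u = valFin (prefixOf u N) + (2:ℝ)⁻¹ ^ N * valInf (fun i => u (N + i)) := by
  induction N generalizing u with
  | zero => simp [prefixOf_zero, valFin_nil]
  | succ n ih =>
    rw [prefixOf_succ, valFin_cons, valInf_shift u, ih (fun i => u (i + 1))]
    have : (fun i => u (i + 1 + n)) = fun i => u (n + 1 + i) := by
      funext i; congr 1; omega
    rw [show (fun i => u (n + i + 1)) = fun i => u (n + 1 + i) from by funext i; congr 1; omega]
    simp only [pow_succ]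
    ring

theorem prefixOf_length (u : ℕ → Bool) (n : ℕ) : (prefixOf u n).length = n := by
  simp [prefixOf]

theorem prefixOf_add (u : ℕ → Bool) (a b : ℕ) :
    prefixOf u (a + b) = prefixOf u a ++ List.ofFn (fun i : Fin b => u (a + i)) := by
  simp only [prefixOf]
  rw [List.ofFn_add]
  congr 1

theorem NEZ_shift {u : ℕ → Bool} (h : NEZ u) (N : ℕ) : NEZ (fun i => u (N + i)) := by
  intro n
  obtain ⟨m, hm1, hm2⟩ := h (N + n)
  exact ⟨m - N, by omega, by simpa [show N + (m - N) = m by omega] using hm2⟩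

theorem prefix_lt {u : ℕ → Bool} (h : NEZ u) (N : ℕ) :
    valFin (prefixOf u N) < valInf u ∧ valInf u ≤ valFin (prefixOf u N) + (2:ℝ)⁻¹ ^ N := by
  have hs := valInf_split u N
  have h1 := valInf_pos (NEZ_shift h N)
  have h2 := valInf_le_one (fun i => u (N + i))
  have hp : (0:ℝ) < 2⁻¹ ^ N := by positivity
  constructor <;> nlinarith

theorem prefix_unique {v : ℕ → Bool} (hv : NEZ v) (w : List Bool) (N : ℕ)
    (hw : w.length = N) (h1 : valFin w < valInf v) (h2 : valInf v ≤ valFin w + (2:ℝ)⁻¹ ^ N) :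
    prefixOf v N = w := by
  by_contra hne
  have hl : (prefixOf v N).length = w.length := by rw [prefixOf_length, hw]
  obtain ⟨hb1, hb2⟩ := prefix_lt hv N
  rcases valFin_sep _ _ hl hne with h | h <;>
    rw [prefixOf_length] at h <;> rw [hw] at * <;> linarith

theorem exists_expansion {y : ℝ} (hy0 : 0 < y) (hy1 : y ≤ 1) :
    ∃ u : ℕ → Bool, NEZ u ∧ valInf u = y := by
  set a : ℕ → ℤ := fun n => ⌈y * 2 ^ n⌉ - 1 with ha
  have h1 : ∀ n, (a n : ℝ) < y * 2 ^ n ∧ y * 2 ^ n ≤ (a n : ℝ) + 1 := by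
    intro n
    constructor
    · push_cast [ha]
      linarith [Int.ceil_lt_add_one (y * 2 ^ n)]
    · push_cast [ha]
      linarith [Int.le_ceil (y * 2 ^ n)]
  have h2 : ∀ n, a (n + 1) = 2 * a n ∨ a (n + 1) = 2 * a n + 1 := by
    intro n
    obtain ⟨l1, r1⟩ := h1 n
    obtain ⟨l2, r2⟩ := h1 (n + 1)
    have e : (2:ℝ) ^ (n+1) = 2 * 2 ^ n := by ring
    have c1 : (a (n+1) : ℝ) < 2 * (a n : ℝ) + 2 := by rw [e] at l2; nlinarith
    have c2 : 2 * (a n : ℝ) < (a (n+1) : ℝ) + 1 := by rw [e] at r2; nlinarith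
    have c1' : a (n+1) < 2 * a n + 2 := by exact_mod_cast c1
    have c2' : 2 * a n < a (n+1) + 1 := by exact_mod_cast c2
    omega
  have ha0 : a 0 = 0 := by
    have hc1 : (0:ℤ) < ⌈y * 2 ^ 0⌉ := Int.lt_ceil.mpr (by norm_num; linarith)
    have hc2 : ⌈y * 2 ^ 0⌉ ≤ 1 := Int.ceil_le.mpr (by norm_num; linarith)
    simp only [ha]; omega
  set u : ℕ → Bool := fun n => decide (a (n + 1) = 2 * a n + 1) with hu
  have h3 : ∀ n, valFin (prefixOf u n) = (a n : ℝ) / 2 ^ n := by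
    intro n
    induction n with
    | zero => simp [prefixOf, valFin_nil, ha0]
    | succ m ih =>
      rw [prefixOf_add u m 1, valFin_append, prefixOf_length]
      have : List.ofFn (fun i : Fin 1 => u (m + ↑i)) = [u m] := by simp
      rw [this, valFin_cons, valFin_nil]
      rcases h2 m with h | h
      · have hum : u m = false := by
          have hne : a (m + 1) ≠ 2 * a m + 1 := by omega
          simp [hu, hne]
        rw [ih, hum, h]
        push_cast
        field_simp
        ring
      · have hum : u m = true := by simp [hu, h]
        rw [ih, hum, h, if_pos rfl]
        push_cast
        simp only [inv_pow]
        field_simp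
        ring
  have key : ∀ n, |valInf u - y| ≤ (2:ℝ)⁻¹ ^ n := by
    intro n
    have hs := valInf_split u n
    have t1 := valInf_nonneg (fun i => u (n + i))
    have t2 := valInf_le_one (fun i => u (n + i))
    have hp : (0:ℝ) < 2⁻¹ ^ n := by positivity
    have hpe : (2:ℝ)⁻¹ ^ n = ((2:ℝ) ^ n)⁻¹ := by rw [inv_pow]
    obtain ⟨l1, r1⟩ := h1 n
    have h2n : (0:ℝ) < 2 ^ n := by positivity
    have hy_lb : (a n : ℝ) / 2 ^ n < y := by rw [div_lt_iff₀ h2n]; linarith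
    have hy_ub : y ≤ (a n : ℝ) / 2 ^ n + 2⁻¹ ^ n := by
      have e : (a n : ℝ) / 2 ^ n + 2⁻¹ ^ n = ((a n : ℝ) + 1) / 2 ^ n := by
        rw [hpe]; field_simp
      rw [e, le_div_iff₀ h2n]; linarith
    rw [abs_le]
    rw [h3 n] at hs
    constructor <;> nlinarith
  have hval : valInf u = y := by
    have h0 : Filter.Tendsto (fun n : ℕ => (2:ℝ)⁻¹ ^ n) Filter.atTop (nhds 0) :=
      tendsto_pow_atTop_nhds_zero_of_lt_one (by norm_num) (by norm_num)
    have := ge_of_tendsto h0 (Filter.Eventually.of_forall key)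
    have := abs_nonneg (valInf u - y)
    have : |valInf u - y| = 0 := le_antisymm (by linarith) (by linarith)
    have := abs_eq_zero.mp this
    linarith
  refine ⟨u, ?_, hval⟩
  intro n
  by_contra hc
  push_neg at hc
  have step : ∀ m, n ≤ m → a (m + 1) = 2 * a m := by
    intro m hm
    rcases h2 m with h | h
    · exact h
    · exfalso
      have : u m = true := by simp [hu, h]
      exact hc m hm this
  have geo : ∀ t : ℕ, a (n + t) = 2 ^ t * a n := by
    intro t
    induction t with
    | zero => simp
    | succ s ihs =>
      have := step (n + s) (by omega)
      rw [show n + (s + 1) = n + s + 1 by omega, this, ihs]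
      ring
  set c : ℝ := y * 2 ^ n - (a n : ℝ) with hc2
  have hcpos : 0 < c := by have := (h1 n).1; simp only [hc2]; linarith
  have hbound : ∀ t : ℕ, 2 ^ t * c ≤ 1 := by
    intro t
    have h1t := (h1 (n + t)).2
    have : ((a (n + t) : ℤ) : ℝ) = 2 ^ t * (a n : ℝ) := by rw [geo t]; push_cast; ring
    rw [this] at h1t
    have e2 : (2:ℝ) ^ (n + t) = 2 ^ n * 2 ^ t := by rw [pow_add]
    rw [e2] at h1t
    simp only [hc2]
    nlinarith
  obtain ⟨t, ht⟩ := pow_unbounded_of_one_lt (R := ℝ) (1 / c) (by norm_num : (1:ℝ) < 2)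
  have : 1 < 2 ^ t * c := by
    rw [div_lt_iff₀ hcpos] at ht
    linarith
  linarith [hbound t]

theorem blockApply_short {k : ℕ} (sigma : List Bool → List Bool) {w : List Bool}
    (h : w.length < k) : blockApply k sigma w = [] := by
  rw [blockApply]
  rw [dif_neg]
  simp only [Bool.and_eq_true, decide_eq_true_eq, not_and]
  omega

theorem blockApply_nil {k : ℕ} (hk : 0 < k) (sigma : List Bool → List Bool) :
    blockApply k sigma [] = [] :=
  blockApply_short sigma (by simpa using hk)

theorem blockApply_block {k : ℕ} (hk : 0 < k) (sigma : List Bool → List Bool) {w : List Bool}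
    (h : w.length = k) : blockApply k sigma w = sigma w := by
  rw [blockApply, dif_pos (by simp only [Bool.and_eq_true, decide_eq_true_eq]; omega)]
  rw [List.take_of_length_le (by omega), List.drop_eq_nil_of_le (by omega),
    blockApply_nil hk]
  simp

theorem blockApply_append {k : ℕ} (hk : 0 < k) (sigma : List Bool → List Bool)
    (w v : List Bool) (hw : k ∣ w.length) :
    blockApply k sigma (w ++ v) = blockApply k sigma w ++ blockApply k sigma v := by
  obtain ⟨c, hc⟩ := hw
  suffices h : ∀ c (w : List Bool), w.length = k * c →
      blockApply k sigma (w ++ v) = blockApply k sigma w ++ blockApply k sigma v from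
    h c w hc
  intro c
  induction c with
  | zero =>
    intro w hc
    have : w = [] := List.eq_nil_of_length_eq_zero (by omega)
    subst this; simp [blockApply_nil hk]
  | succ d ih =>
    intro w hc
    have hkw : k ≤ w.length := by
      have : 0 < k := hk
      calc k = k * 1 := (mul_one k).symm
        _ ≤ k * (d + 1) := Nat.mul_le_mul_left k (by omega)
        _ = w.length := hc.symm
    have e1 : (w ++ v).take k = w.take k := List.take_append_of_le_length hkw
    have e2 : (w ++ v).drop k = w.drop k ++ v := List.drop_append_of_le_length hkw
    have hdrop : (w.drop k).length = k * d := by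
      rw [List.length_drop]
      have : k * (d + 1) = k * d + k := by ring
      omega
    have hcond : (0 < k && k <= (w ++ v).length) = true := by
      simp only [Bool.and_eq_true, decide_eq_true_eq, List.length_append]
      omega
    rw [blockApply, dif_pos hcond, e1, e2, ih _ hdrop]
    have hcond2 : (0 < k && k <= w.length) = true := by
      simp only [Bool.and_eq_true, decide_eq_true_eq]
      omega
    conv_rhs => rw [blockApply, dif_pos hcond2]
    rw [List.append_assoc]

section W
variable (k : ℕ) (sigma : List Bool → List Bool)

/-- the n-block image -/
noncomputable def Wd (u : ℕ → Bool) (n : ℕ) : List Bool :=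
  blockApply k sigma (prefixOf u (n * k))

/-- the n-th block -/
def Bd (u : ℕ → Bool) (n : ℕ) : List Bool := List.ofFn fun i : Fin k => u (n * k + i)

theorem Bd_length (u : ℕ → Bool) (n : ℕ) : (Bd k u n).length = k := by simp [Bd]

theorem Wd_add (hk : 0 < k) (u : ℕ → Bool) (n t : ℕ) :
    Wd k sigma u (n + t) = Wd k sigma u n ++
      blockApply k sigma (List.ofFn fun i : Fin (t * k) => u (n * k + i)) := by
  rw [Wd, Wd, add_mul, prefixOf_add, blockApply_append hk]
  rw [prefixOf_length]
  exact dvd_mul_left k n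

theorem Wd_succ (hk : 0 < k) (u : ℕ → Bool) (n : ℕ) :
    Wd k sigma u (n + 1) = Wd k sigma u n ++ sigma (Bd k u n) := by
  rw [Wd, Wd, show (n+1) * k = n * k + k from by ring, prefixOf_add,
    blockApply_append hk sigma (prefixOf u (n * k)) (List.ofFn fun i : Fin k => u (n * k + i)) (by rw [prefixOf_length]; exact dvd_mul_left k n),
    blockApply_block hk sigma (w := List.ofFn fun i : Fin k => u (n * k + i)) (by simp)]
  rfl

theorem Wd_mono_le (hk : 0 < k) (u : ℕ → Bool) {n m : ℕ} (h : n ≤ m) :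
    (Wd k sigma u n).length ≤ (Wd k sigma u m).length ∧
    valFin (Wd k sigma u n) ≤ valFin (Wd k sigma u m) := by
  obtain ⟨t, rfl⟩ := Nat.exists_eq_add_of_le h
  rw [Wd_add k sigma hk u n t, List.length_append, valFin_append]
  constructor
  · omega
  · have h1 := valFin_nonneg (blockApply k sigma (List.ofFn fun i : Fin (t * k) => u (n * k + i)))
    have h2 : (0:ℝ) < 2⁻¹ ^ (Wd k sigma u n).length := by positivity
    nlinarith

theorem Wd_sup_bounds (hk : 0 < k) (u : ℕ → Bool) (n : ℕ) :
    valFin (Wd k sigma u n) ≤ (⨆ m : ℕ, valFin (Wd k sigma u m)) ∧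
    (⨆ m : ℕ, valFin (Wd k sigma u m)) ≤ valFin (Wd k sigma u n)
      + (2:ℝ)⁻¹ ^ (Wd k sigma u n).length := by
  have hbdd : BddAbove (Set.range fun m => valFin (Wd k sigma u m)) := by
    refine ⟨1, ?_⟩
    rintro y ⟨m, rfl⟩
    exact valFin_le_one _
  constructor
  · exact le_ciSup hbdd n
  · apply ciSup_le
    intro m
    rcases le_total m n with h | h
    · have := (Wd_mono_le k sigma hk u h).2
      have h2 : (0:ℝ) < 2⁻¹ ^ (Wd k sigma u n).length := by positivity
      linarith
    · obtain ⟨t, rfl⟩ := Nat.exists_eq_add_of_le h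
      rw [Wd_add k sigma hk u n t, valFin_append]
      have h1 := valFin_le_one (blockApply k sigma (List.ofFn fun i : Fin (t * k) => u (n * k + i)))
      have h2 : (0:ℝ) < 2⁻¹ ^ (Wd k sigma u n).length := by positivity
      nlinarith

end W

/-- mismatch-infinitely-often property -/
def MIS (k : ℕ) (weps : List Bool) (u : ℕ → Bool) : Prop :=
  ∀ m : ℕ, ∃ j : ℕ, u (m * k + j) ≠ weps.getD (j % k) false

theorem getD_ofFn {m : ℕ} (f : Fin m → Bool) {r : ℕ} (hr : r < m) :
    (List.ofFn f).getD r false = f ⟨r, hr⟩ := by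
  rw [List.getD_eq_getElem _ _ (by simpa using hr)]
  simp

theorem tilde_spec {x : ℝ} (h : ∃ u : ℕ → Bool, NEZ u ∧ valInf u = x) :
    NEZ (tilde x) ∧ valInf (tilde x) = x := by
  rw [tilde, dif_pos h]
  exact h.choose_spec

theorem prefixOf_eq_imp {u v : ℕ → Bool} {N : ℕ} (h : prefixOf u N = prefixOf v N)
    {i : ℕ} (hi : i < N) : u i = v i := by
  have hcal := congrArg (fun l : List Bool => l.getD i false) h
  simp only [prefixOf] at hcal
  have h1 : (List.ofFn fun j : Fin N => u j).getD i false = u i := getD_ofFn _ hi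
  have h2 : (List.ofFn fun j : Fin N => v j).getD i false = v i := getD_ofFn _ hi
  rw [h1, h2] at hcal
  exact hcal

section main
variable (k : ℕ) (sigma : List Bool → List Bool) (weps : List Bool)

theorem blocks_ne (hk : 0 < k) {u : ℕ → Bool} (h : MIS k weps u) (m : ℕ) :
    ∃ b : ℕ, m ≤ b ∧ Bd k u b ≠ weps := by
  obtain ⟨j, hj⟩ := h m
  refine ⟨m + j / k, Nat.le_add_right m _, fun he => hj ?_⟩
  have hr : j % k < k := Nat.mod_lt _ hk
  have hp : m * k + j = (m + j / k) * k + j % k := by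
    rw [add_mul, add_assoc, Nat.div_add_mod']
  have : u ((m + j / k) * k + j % k) = (Bd k u (m + j / k)).getD (j % k) false := by
    rw [Bd, getD_ofFn _ hr]
  rw [hp, this, he]

theorem L_unbounded (hk : 0 < k) (hlen : weps.length = k)
    (herase : ∀ w : List Bool, w.length = k → (sigma w = [] ↔ w = weps))
    {u : ℕ → Bool} (h : MIS k weps u) (c : ℕ) :
    ∃ n : ℕ, c ≤ (Wd k sigma u n).length := by
  induction c with
  | zero => exact ⟨0, Nat.zero_le _⟩
  | succ d ih =>
    obtain ⟨n, hn⟩ := ih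
    obtain ⟨b, hb1, hb2⟩ := blocks_ne k weps hk h n
    have hσ : sigma (Bd k u b) ≠ [] := fun he => hb2 ((herase _ (Bd_length k u b)).mp he)
    have hσ1 : 1 ≤ (sigma (Bd k u b)).length := List.length_pos_iff.mpr hσ
    refine ⟨b + 1, ?_⟩
    rw [Wd_succ k sigma hk u b, List.length_append]
    have := (Wd_mono_le k sigma hk u hb1).1
    omega

theorem weps_false (hk : 0 < k) (hlen : weps.length = k)
    (hne1 : weps ≠ List.replicate k true) :
    ∃ r : ℕ, r < k ∧ weps.getD r false = false := by
  by_contra hc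
  push_neg at hc
  apply hne1
  apply List.ext_getElem (by simp [hlen])
  intro i h1 h2
  have hik : i < k := by omega
  have := hc i hik
  rw [List.getD_eq_getElem _ _ (by omega)] at this
  simp only [List.getElem_replicate]
  revert this
  cases weps[i] <;> simp

theorem eventually_true_of_dyadic {u : ℕ → Bool} (hu : NEZ u) {a b : ℕ}
    (hval : valInf u = (a : ℝ) / 2 ^ b) : ∀ m, b ≤ m → u m = true := by
  intro m hm
  by_contra hc
  have hum : u m = false := by revert hc; cases u m <;> simp

  -- split at m+1
  have hs := valInf_split u (m + 1)
  have hpref : prefixOf u (m + 1) = prefixOf u m ++ [u m] := by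
    rw [prefixOf_add u m 1]
    simp
  obtain ⟨a', ha'⟩ := valFin_dyadic (prefixOf u m)
  rw [prefixOf_length] at ha'
  have hv1 : valFin (prefixOf u (m + 1)) = (a' : ℝ) / 2 ^ m := by
    rw [hpref, valFin_append, ha', hum, valFin_cons, valFin_nil]
    simp
  have htail1 := valInf_pos (NEZ_shift hu (m + 1))
  have htail2 := valInf_le_one (fun i => u (m + 1 + i))
  have hlb : (a' : ℝ) / 2 ^ m < valInf u := by
    rw [hs, hv1]
    have : (0:ℝ) < 2⁻¹ ^ (m + 1) := by positivity
    nlinarith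
  have hub : valInf u ≤ (a' : ℝ) / 2 ^ m + 2⁻¹ ^ (m + 1) := by
    rw [hs, hv1]
    have : (0:ℝ) < 2⁻¹ ^ (m + 1) := by positivity
    nlinarith
  -- multiply by 2^(m+1)
  set T : ℕ := a * 2 ^ (m + 1 - b) with hT
  have hTcast : (T : ℝ) = valInf u * 2 ^ (m + 1) := by
    rw [hval, hT]
    push_cast
    rw [show (2:ℝ) ^ (m + 1) = 2 ^ b * 2 ^ (m + 1 - b) by rw [← pow_add]; congr 1; omega]
    field_simp
  have h2m : (0:ℝ) < 2 ^ (m + 1) := by positivity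
  have hl : (2 * a' : ℝ) < (T : ℝ) := by
    rw [hTcast]
    have := hlb
    have e : (a' : ℝ) / 2 ^ m * 2 ^ (m + 1) = 2 * a' := by
      rw [pow_succ]; field_simp
    nlinarith [hlb]
  have hr : (T : ℝ) ≤ 2 * a' + 1 := by
    rw [hTcast]
    have hpe : (2:ℝ)⁻¹ ^ (m + 1) * 2 ^ (m + 1) = 1 := by
      rw [inv_pow]
      field_simp
    have e : ((a' : ℝ) / 2 ^ m + 2⁻¹ ^ (m + 1)) * 2 ^ (m + 1) = 2 * a' + 1 := by
      rw [pow_succ]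
      simp only [inv_pow]
      field_simp
      ring
    nlinarith [hub]
  have hl' : 2 * a' < T := by exact_mod_cast hl
  have hr' : T ≤ 2 * a' + 1 := by exact_mod_cast hr
  have hTodd : T = 2 * a' + 1 := by omega
  have hTeven : 2 ∣ T := by
    rw [hT]
    have : 0 < m + 1 - b := by omega
    exact Dvd.dvd.mul_left (dvd_pow_self 2 (by omega)) a
  omega

end main

section final
variable (k : ℕ) (sigma : List Bool → List Bool) (weps : List Bool)

theorem MIS_of_eventually_true (hk : 0 < k) (hlen : weps.length = k)
    (hne1 : weps ≠ List.replicate k true) {u : ℕ → Bool} {b : ℕ}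
    (h : ∀ m, b ≤ m → u m = true) : MIS k weps u := by
  obtain ⟨r, hr, hfalse⟩ := weps_false k weps hk hlen hne1
  intro m
  refine ⟨b * k + r, ?_⟩
  have hmod : (b * k + r) % k = r := by
    simp [Nat.add_mod, Nat.mul_mod_left, Nat.mod_eq_of_lt hr]
  rw [hmod, hfalse]
  have : b ≤ m * k + (b * k + r) := by
    calc b ≤ b * k := Nat.le_mul_of_pos_right b hk
      _ ≤ m * k + (b * k + r) := by omega
  rw [h _ this]
  simp

theorem fSigma_eq_sup {x : ℝ} (hex : ∃ u : ℕ → Bool, NEZ u ∧ valInf u = x)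
    (hnot : ∃ i : ℕ, tilde x i ≠ weps.getD (i % k) false) :
    fSigma k sigma weps x = ⨆ n : ℕ, valFin (Wd k sigma (tilde x) n) := by
  rw [fSigma, if_neg]
  · rfl
  · push_neg
    exact ⟨hex, hnot⟩

theorem key_estimate (hk : 2 ≤ k) (hlen : weps.length = k)
    (herase : ∀ w : List Bool, w.length = k → (sigma w = [] ↔ w = weps))
    {x : ℝ} (hx0 : 0 < x) (hx1 : x ≤ 1) (hmis : MIS k weps (tilde x))
    {ε : ℝ} (hε : 0 < ε) :
    ∃ N : ℕ, 0 < N ∧ ∀ y : ℝ, 0 < y → y ≤ 1 →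
      prefixOf (tilde y) N = prefixOf (tilde x) N →
      |fSigma k sigma weps y - fSigma k sigma weps x| < ε := by
  have hk0 : 0 < k := by omega
  obtain ⟨c, hc⟩ := exists_pow_lt_of_lt_one hε (by norm_num : (2:ℝ)⁻¹ < 1)
  obtain ⟨n, hn⟩ := L_unbounded k sigma weps hk0 hlen herase hmis c
  obtain ⟨j, hj⟩ := hmis n
  set n' : ℕ := n + j + 1 with hn'
  set N : ℕ := n' * k with hN
  have hjN : n * k + j < N := by
    have e1 : n' * k = n * k + (j + 1) * k := by rw [hn']; ring
    have h2 : j + 1 ≤ (j + 1) * k := Nat.le_mul_of_pos_right _ hk0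
    omega
  have hex_x : ∃ u : ℕ → Bool, NEZ u ∧ valInf u = x := exists_expansion hx0 hx1
  have hnot_x : ∃ i : ℕ, tilde x i ≠ weps.getD (i % k) false := by
    obtain ⟨j0, hj0⟩ := hmis 0
    exact ⟨j0, by simpa using hj0⟩
  refine ⟨N, by positivity, fun y hy0 hy1 hpre => ?_⟩
  have hex_y : ∃ u : ℕ → Bool, NEZ u ∧ valInf u = y := exists_expansion hy0 hy1
  have hnot_y : ∃ i : ℕ, tilde y i ≠ weps.getD (i % k) false := by
    refine ⟨n * k + j, ?_⟩
    rw [prefixOf_eq_imp hpre hjN]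
    have : (n * k + j) % k = j % k := by
      simp [Nat.add_mod, Nat.mul_mod_left]
    rw [this]
    exact hj
  rw [fSigma_eq_sup k sigma weps hex_x hnot_x, fSigma_eq_sup k sigma weps hex_y hnot_y]
  have hWeq : Wd k sigma (tilde y) n' = Wd k sigma (tilde x) n' := by
    rw [Wd, Wd, hpre]
  have hLn' : c ≤ (Wd k sigma (tilde x) n').length := by
    have := (Wd_mono_le k sigma hk0 (tilde x) (show n ≤ n' by omega)).1
    omega
  obtain ⟨bx1, bx2⟩ := Wd_sup_bounds k sigma hk0 (tilde x) n'
  obtain ⟨by1, by2⟩ := Wd_sup_bounds k sigma hk0 (tilde y) n'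
  rw [hWeq] at by1 by2
  have hle : (2:ℝ)⁻¹ ^ (Wd k sigma (tilde x) n').length ≤ 2⁻¹ ^ c :=
    pow_le_pow_of_le_one (by norm_num) (by norm_num) hLn'
  rw [abs_sub_lt_iff]
  constructor <;> nlinarith
end final


/-- `fSigma` is continuous (within `[0,1]`) at every point of
`C^σ = [0,1] \ (Q₂⁰ ∪ E^σ)`, and left-continuous at every nonzero dyadic
rational of `[0,1]`. -/
theorem fSigma_continuity
    (k : Nat) (sigma : List Bool -> List Bool) (weps : List Bool)
    (hk : 2 ≤ k) (hlen : weps.length = k)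
    (hne1 : weps ≠ List.replicate k true)
    (herase : ∀ w : List Bool, w.length = k → (sigma w = [] ↔ w = weps)) :
    (∀ x ∈ Set.Icc (0:ℝ) 1 \ (Dyadic01 ∪ Esigma k weps),
      ContinuousWithinAt (fSigma k sigma weps) (Set.Icc 0 1) x) ∧
    (∀ x ∈ Dyadic01 ∩ Set.Icc (0:ℝ) 1, x ≠ 0 →
      Filter.Tendsto (fSigma k sigma weps) (nhdsWithin x (Set.Iio x))
        (nhds (fSigma k sigma weps x))) := by
  constructor
  · rintro x ⟨⟨hx0, hx1⟩, hxnot⟩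
    have hxd : x ∉ Dyadic01 := fun h => hxnot (Or.inl h)
    have hxE : x ∉ Esigma k weps := fun h => hxnot (Or.inr h)
    have hx0' : 0 < x := lt_of_le_of_ne hx0 fun h =>
      hxd ⟨0, 0, by rw [← h]; norm_num⟩
    have hex := exists_expansion hx0' hx1
    obtain ⟨hnez, hval⟩ := tilde_spec hex
    have hmis : MIS k weps (tilde x) := by
      intro m
      by_contra hcon
      push_neg at hcon
      exact hxE ⟨m, hcon⟩
    rw [Metric.continuousWithinAt_iff]
    intro ε hε
    obtain ⟨N, hN0, hkey⟩ := key_estimate k sigma weps hk hlen herase hx0' hx1 hmis hε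
    obtain ⟨hlt, hle⟩ := prefix_lt hnez N
    rw [hval] at hlt hle
    set P := prefixOf (tilde x) N with hP
    have hxlt : x < valFin P + 2⁻¹ ^ N := by
      rcases lt_or_eq_of_le hle with h | h
      · exact h
      · exfalso
        apply hxd
        obtain ⟨a, ha⟩ := valFin_dyadic P
        rw [hP, prefixOf_length] at ha
        refine ⟨a + 1, N, ?_⟩
        rw [h, ha, inv_pow]
        push_cast
        field_simp
    refine ⟨min (x - valFin P) (valFin P + 2⁻¹ ^ N - x),
      lt_min (by linarith) (by linarith), ?_⟩
    intro y hy hdist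
    rw [Real.dist_eq, abs_lt] at hdist
    have hd1 := hdist.1
    have hd2 := hdist.2
    have hmin1 := min_le_left (x - valFin P) (valFin P + 2⁻¹ ^ N - x)
    have hmin2 := min_le_right (x - valFin P) (valFin P + 2⁻¹ ^ N - x)
    have hygt : valFin P < y := by linarith
    have hylt : y < valFin P + 2⁻¹ ^ N := by linarith
    have hy0' : 0 < y := lt_of_le_of_lt (valFin_nonneg P) hygt
    have hyle : y ≤ 1 := hy.2
    have hey := exists_expansion hy0' hyle
    obtain ⟨hnezy, hvaly⟩ := tilde_spec hey
    have hpre : prefixOf (tilde y) N = P :=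
      prefix_unique hnezy P N (by rw [hP, prefixOf_length]) (by rw [hvaly]; exact hygt)
        (by rw [hvaly]; linarith)
    rw [Real.dist_eq]
    exact hkey y hy0' hyle hpre
  · rintro x ⟨⟨a, b, hab⟩, hx0i, hx1⟩ hxne
    have hx0' : 0 < x := lt_of_le_of_ne hx0i (Ne.symm hxne)
    have hex := exists_expansion hx0' hx1
    obtain ⟨hnez, hval⟩ := tilde_spec hex
    have hevtrue := eventually_true_of_dyadic hnez (a := a) (b := b) (by rw [hval, hab])
    have hmis := MIS_of_eventually_true k weps (by omega) hlen hne1 hevtrue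
    rw [Metric.tendsto_nhdsWithin_nhds]
    intro ε hε
    obtain ⟨N, hN0, hkey⟩ := key_estimate k sigma weps hk hlen herase hx0' hx1 hmis hε
    obtain ⟨hlt, hle⟩ := prefix_lt hnez N
    rw [hval] at hlt hle
    set P := prefixOf (tilde x) N with hP
    refine ⟨x - valFin P, by linarith, ?_⟩
    intro y hyIio hdist
    rw [Real.dist_eq, abs_lt] at hdist
    have hylt : y < x := hyIio
    have hygt : valFin P < y := by linarith [hdist.1]
    have hy0' : 0 < y := lt_of_le_of_lt (valFin_nonneg P) hygt
    have hyle : y ≤ 1 := le_trans (le_of_lt hylt) hx1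
    have hey := exists_expansion hy0' hyle
    obtain ⟨hnezy, hvaly⟩ := tilde_spec hey
    have hpre : prefixOf (tilde y) N = P :=
      prefix_unique hnezy P N (by rw [hP, prefixOf_length]) (by rw [hvaly]; exact hygt)
        (by rw [hvaly]; linarith)
    rw [Real.dist_eq]
    exact hkey y hy0' hyle hpre
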